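/- Let n > 2, 0 ≤ m < 2, and p(x) = -x^(1-m/2) ψ'(x) with ψ as above. Then lim_{x↓0} Γ((n-m)/2) p(x) = (n/2 - 1) Γ(1 - m/2); in particular 0 < lim_{x↓0} p(x) < ∞ and sup_{x>0} p(x) < ∞. -/

import Mathlib

open MeasureTheory Real Filter Set

lemma integrable_pow_exp {s b : ℝ} (hs : -1 < s) (hb : 0 < b) :
    IntegrableOn (fun w : ℝ => w ^ s * Real.exp (-(b * w))) (Set.Ioi 0) := by
  have h := integrableOn_rpow_mul_exp_neg_mul_rpow hs one_pos hb
  refine h.congr_fun (fun x hx => ?_) measurableSet_Ioi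
  beta_reduce
  rw [Real.rpow_one, neg_mul]

lemma one_sub_rpow_le {σ a : ℝ} (h0 : 0 < σ) (h1 : σ ≤ 1) (ha : 0 < a) :
    1 - σ ^ a ≤ max a 1 * (1 - σ) := by
  rcases le_total 1 a with h | h
  · have := one_add_mul_self_le_rpow_one_add (s := σ - 1) (by linarith) h
    have e : (1 : ℝ) + (σ - 1) = σ := by ring
    rw [e] at this
    calc 1 - σ ^ a ≤ -(a * (σ - 1)) := by linarith
      _ = a * (1 - σ) := by ring
      _ ≤ max a 1 * (1 - σ) := by
          apply mul_le_mul_of_nonneg_right (le_max_left _ _); linarith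
  · have : σ ^ (1:ℝ) ≤ σ ^ a := Real.rpow_le_rpow_of_exponent_ge h0 h1 h
    rw [Real.rpow_one] at this
    calc 1 - σ ^ a ≤ 1 - σ := by linarith
      _ ≤ max a 1 * (1 - σ) := by nlinarith [le_max_right a (1:ℝ)]

lemma g_mem {a w : ℝ} (ha : 0 < a) (hw : 0 < w) :
    0 ≤ 1 - (w / (1 + w)) ^ a ∧ 1 - (w / (1 + w)) ^ a ≤ 1 := by
  have h1 : (0:ℝ) < 1 + w := by linarith
  have hb0 : 0 ≤ w / (1 + w) := by positivity
  have hb1 : w / (1 + w) ≤ 1 := by rw [div_le_one h1]; linarith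
  have h2 : (w / (1 + w)) ^ a ≤ 1 := Real.rpow_le_one hb0 hb1 ha.le
  have h3 : 0 ≤ (w / (1 + w)) ^ a := Real.rpow_nonneg hb0 a
  constructor <;> linarith

lemma contOn_integrand (a q x : ℝ) :
    ContinuousOn (fun w : ℝ => (1 - (w / (1 + w)) ^ a) * w ^ q * Real.exp (-x * w))
      (Set.Ioi 0) := by
  have h1 : ContinuousOn (fun w : ℝ => (w / (1 + w)) ^ a) (Set.Ioi 0) := by
    apply ContinuousOn.rpow_const
    · exact continuousOn_id.div (continuousOn_const.add continuousOn_id)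
        (fun w hw => by simp only [mem_Ioi] at hw; positivity)
    · intro w hw
      simp only [mem_Ioi] at hw
      left; positivity
  have h2 : ContinuousOn (fun w : ℝ => w ^ q) (Set.Ioi 0) :=
    ContinuousOn.rpow_const continuousOn_id
      (fun w hw => Or.inl (ne_of_gt (mem_Ioi.mp hw)))
  exact ((continuousOn_const.sub h1).mul h2).mul
    ((continuousOn_const.mul continuousOn_id).rexp)

lemma hasDerivAt_integral (a q : ℝ) (ha : 0 < a) (hq : -1 < q) {x₀ : ℝ} (hx₀ : 0 < x₀) :
    HasDerivAt (fun x => ∫ w in Set.Ioi (0:ℝ),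
        (1 - (w / (1 + w)) ^ a) * w ^ q * Real.exp (-x * w))
      (∫ w in Set.Ioi (0:ℝ),
        -((1 - (w / (1 + w)) ^ a) * w ^ (q + 1) * Real.exp (-x₀ * w))) x₀ := by
  have key := hasDerivAt_integral_of_dominated_loc_of_deriv_le
    (F := fun x w => (1 - (w / (1 + w)) ^ a) * w ^ q * Real.exp (-x * w))
    (F' := fun x w => -((1 - (w / (1 + w)) ^ a) * w ^ (q + 1) * Real.exp (-x * w)))
    (x₀ := x₀) (μ := volume.restrict (Set.Ioi 0))
    (bound := fun w => w ^ (q + 1) * Real.exp (-(x₀ / 2 * w)))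
    (s := Metric.ball x₀ (x₀ / 2)) (Metric.ball_mem_nhds _ (by positivity))
    ?_ ?_ ?_ ?_ ?_ ?_
  · exact key.2
  · exact Eventually.of_forall fun x =>
      (contOn_integrand a q x).aestronglyMeasurable measurableSet_Ioi
  · -- Integrable (F x₀)
    apply Integrable.mono' (integrable_pow_exp hq hx₀)
      ((contOn_integrand a q x₀).aestronglyMeasurable measurableSet_Ioi)
    rw [ae_restrict_iff' measurableSet_Ioi]
    refine Eventually.of_forall fun w hw => ?_
    simp only [mem_Ioi] at hw
    obtain ⟨hg0, hg1⟩ := g_mem ha hw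
    have hwq : (0:ℝ) ≤ w ^ q := Real.rpow_nonneg hw.le q
    rw [Real.norm_eq_abs, abs_of_nonneg (by positivity)]
    rw [neg_mul]
    have : Real.exp (-(x₀ * w)) ≤ Real.exp (-(x₀ * w)) := le_rfl
    nlinarith [Real.exp_pos (-(x₀ * w)), mul_nonneg hwq (Real.exp_pos (-(x₀*w))).le]
  · -- AESM (F' x₀)
    apply AEStronglyMeasurable.neg
    exact (contOn_integrand a (q+1) x₀).aestronglyMeasurable measurableSet_Ioi
  · -- bound
    rw [ae_restrict_iff' measurableSet_Ioi]
    refine Eventually.of_forall fun w hw x hx => ?_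
    simp only [mem_Ioi] at hw
    simp only [Metric.mem_ball, Real.dist_eq] at hx
    have hx2 : x₀ / 2 ≤ x := by cases abs_lt.mp hx; linarith
    obtain ⟨hg0, hg1⟩ := g_mem ha hw
    have hwq : (0:ℝ) ≤ w ^ (q+1) := Real.rpow_nonneg hw.le _
    have hexp : Real.exp (-x * w) ≤ Real.exp (-(x₀ / 2 * w)) := by
      apply Real.exp_le_exp.mpr; nlinarith
    rw [norm_neg, Real.norm_eq_abs, abs_of_nonneg (by positivity)]
    have h1 : (1 - (w / (1 + w)) ^ a) * w ^ (q+1) ≤ w ^ (q+1) := by nlinarith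
    calc (1 - (w / (1 + w)) ^ a) * w ^ (q+1) * Real.exp (-x * w)
        ≤ w ^ (q+1) * Real.exp (-x * w) := by
          apply mul_le_mul_of_nonneg_right h1 (Real.exp_pos _).le
      _ ≤ w ^ (q+1) * Real.exp (-(x₀/2 * w)) := by
          apply mul_le_mul_of_nonneg_left hexp hwq
  · exact integrable_pow_exp (by linarith) (by positivity)
  · -- h_diff
    rw [ae_restrict_iff' measurableSet_Ioi]
    refine Eventually.of_forall fun w hw x hx => ?_
    simp only [mem_Ioi] at hw
    have hd : HasDerivAt (fun x : ℝ => Real.exp (-x * w)) (Real.exp (-x * w) * (-w)) x := by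
      have h1 : HasDerivAt (fun x : ℝ => -x * w) (-w) x := by
        simpa using ((hasDerivAt_id x).neg.mul_const w)
      exact h1.exp
    have := hd.const_mul ((1 - (w / (1 + w)) ^ a) * w ^ q)
    convert this using 1
    · rfl
    have hsplit : w ^ (q + 1) = w ^ q * w := by
      rw [Real.rpow_add hw, Real.rpow_one]
    simp only [hsplit]; ring

lemma slope_limit {a u : ℝ} (ha : 0 < a) (hu : 0 < u) :
    Tendsto (fun x => (1 - (u / (x + u)) ^ a) / x) (nhdsWithin 0 (Set.Ioi 0))
      (nhds (a / u)) := by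
  have h1 : HasDerivAt (fun x : ℝ => x + u) 1 0 := (hasDerivAt_id 0).add_const u
  have h2 : HasDerivAt (fun x : ℝ => (x + u)⁻¹) (-1 / (0 + u) ^ 2) 0 :=
    h1.inv (by positivity)
  have h3 : HasDerivAt (fun x : ℝ => u * (x + u)⁻¹) (u * (-1 / (0 + u) ^ 2)) 0 :=
    h2.const_mul u
  have h4 : HasDerivAt (fun x : ℝ => (u * (x + u)⁻¹) ^ a)
      (u * (-1 / (0 + u) ^ 2) * a * (u * (0 + u)⁻¹) ^ (a - 1)) 0 := by
    apply h3.rpow_const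
    left
    have : u * (0 + u)⁻¹ = 1 := by field_simp; ring
    rw [this]; norm_num
  have hval : u * (-1 / (0 + u) ^ 2) * a * (u * (0 + u)⁻¹) ^ (a - 1) = -(a / u) := by
    have e1 : u * (0 + u)⁻¹ = 1 := by field_simp; ring
    rw [e1, Real.one_rpow]
    field_simp
    ring
  rw [hval] at h4
  have h5 := hasDerivAt_iff_tendsto_slope.mp h4
  have h6 : Tendsto (fun x => -slope (fun x : ℝ => (u * (x + u)⁻¹) ^ a) 0 x)
      (nhdsWithin 0 {(0:ℝ)}ᶜ) (nhds (a / u)) := by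
    simpa using h5.neg
  have h7 : Tendsto (fun x => -slope (fun x : ℝ => (u * (x + u)⁻¹) ^ a) 0 x)
      (nhdsWithin 0 (Set.Ioi 0)) (nhds (a / u)) :=
    h6.mono_left (nhdsWithin_mono 0 (fun x hx => ne_of_gt hx))
  apply h7.congr'
  filter_upwards [self_mem_nhdsWithin] with x hx
  simp only [mem_Ioi] at hx
  rw [slope_def_field]
  have e0 : u * ((0:ℝ) + u)⁻¹ = 1 := by field_simp; ring
  have ex : u * (x + u)⁻¹ = u / (x + u) := by rw [div_eq_mul_inv]
  rw [e0, ex, Real.one_rpow]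
  ring

lemma one_sub_rpow_le' {σ a : ℝ} (h0 : 0 < σ) (h1 : σ ≤ 1) (ha : 0 < a) :
    1 - σ ^ a ≤ max a 1 * (1 - σ) := by
  rcases le_total 1 a with h | h
  · have := one_add_mul_self_le_rpow_one_add (s := σ - 1) (by linarith) h
    have e : (1 : ℝ) + (σ - 1) = σ := by ring
    rw [e] at this
    calc 1 - σ ^ a ≤ -(a * (σ - 1)) := by linarith
      _ = a * (1 - σ) := by ring
      _ ≤ max a 1 * (1 - σ) := by
          apply mul_le_mul_of_nonneg_right (le_max_left _ _); linarith
  · have : σ ^ (1:ℝ) ≤ σ ^ a := Real.rpow_le_rpow_of_exponent_ge h0 h1 h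
    rw [Real.rpow_one] at this
    calc 1 - σ ^ a ≤ 1 - σ := by linarith
      _ ≤ max a 1 * (1 - σ) := by nlinarith [le_max_right a (1:ℝ)]

lemma k_bound {a m x u : ℝ} (ha : 0 < a) (hx : 0 < x) (hu : 0 < u) :
    0 ≤ (1 - (u / (x + u)) ^ a) * u ^ (1 - m / 2) * Real.exp (-u) * x⁻¹ ∧
    (1 - (u / (x + u)) ^ a) * u ^ (1 - m / 2) * Real.exp (-u) * x⁻¹ ≤
      max a 1 * (u ^ (-m / 2) * Real.exp (-u)) := by
  have hxu : (0:ℝ) < x + u := by linarith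
  have hσ0 : 0 < u / (x + u) := by positivity
  have hσ1 : u / (x + u) ≤ 1 := by rw [div_le_one hxu]; linarith
  have hg0 : 0 ≤ 1 - (u / (x + u)) ^ a := by
    have := Real.rpow_le_one hσ0.le hσ1 ha.le; linarith
  have hP : (0:ℝ) < u ^ (-m/2) := Real.rpow_pos_of_pos hu _
  have hE : (0:ℝ) < Real.exp (-u) := Real.exp_pos _
  have hsplit : u ^ (1 - m/2) = u ^ (-m/2) * u := by
    rw [show (1 - m/2 : ℝ) = -m/2 + 1 by ring, Real.rpow_add hu, Real.rpow_one]
  constructor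
  · positivity
  · have hb := one_sub_rpow_le' hσ0 hσ1 ha
    have hσeq : 1 - u / (x + u) = x / (x + u) := by field_simp; ring
    rw [hσeq] at hb
    have h2 : (1 - (u / (x + u)) ^ a) * (x + u) ≤ max a 1 * x := by
      have h := mul_le_mul_of_nonneg_right hb hxu.le
      rw [mul_assoc, div_mul_cancel₀ _ hxu.ne'] at h
      exact h
    have h3 : (1 - (u / (x + u)) ^ a) * u ≤ max a 1 * x := by
      nlinarith
    rw [hsplit, mul_inv_le_iff₀ hx]
    nlinarith [mul_le_mul_of_nonneg_right h3 (mul_pos hP hE).le]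
lemma contOn_k (a r x : ℝ) (hx : 0 < x) :
    ContinuousOn (fun u : ℝ => (1 - (u / (x + u)) ^ a) * u ^ r * Real.exp (-u) * x⁻¹)
      (Set.Ioi 0) := by
  have h1 : ContinuousOn (fun u : ℝ => (u / (x + u)) ^ a) (Set.Ioi 0) := by
    apply ContinuousOn.rpow_const
    · exact continuousOn_id.div (continuousOn_const.add continuousOn_id)
        (fun u hu => by simp only [mem_Ioi] at hu; positivity)
    · intro u hu
      simp only [mem_Ioi] at hu
      left; positivity
  have h2 : ContinuousOn (fun u : ℝ => u ^ r) (Set.Ioi 0) :=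
    ContinuousOn.rpow_const continuousOn_id
      (fun u hu => Or.inl (ne_of_gt (mem_Ioi.mp hu)))
  exact ((((continuousOn_const.sub h1).mul h2).mul
    continuousOn_id.neg.rexp).mul continuousOn_const)

theorem p_limit_at_zero (n m : ℝ) (hn : 2 < n) (hm0 : 0 ≤ m) (hm2 : m < 2)
    (ψ : ℝ → ℝ)
    (hψ : ∀ x : ℝ, ψ x = (1 / Real.Gamma ((n - m) / 2)) *
      ∫ w in Set.Ioi (0:ℝ),
        (1 - (w / (1 + w)) ^ (n / 2 - 1)) * w ^ (-m / 2) * Real.exp (-x * w))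
    (p : ℝ → ℝ) (hp : ∀ x : ℝ, p x = -x ^ (1 - m / 2) * deriv ψ x) :
    Tendsto (fun x => Real.Gamma ((n - m) / 2) * p x) (nhdsWithin 0 (Set.Ioi 0))
        (nhds ((n / 2 - 1) * Real.Gamma (1 - m / 2))) ∧
      (∃ l : ℝ, 0 < l ∧
        Tendsto p (nhdsWithin 0 (Set.Ioi 0)) (nhds l)) ∧
      ∃ C : ℝ, ∀ x : ℝ, 0 < x → p x ≤ C := by
  have ha : (0:ℝ) < n / 2 - 1 := by linarith
  have hq : (-1:ℝ) < -m / 2 := by linarith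
  have hΓ : 0 < Real.Gamma ((n - m) / 2) := Real.Gamma_pos_of_pos (by linarith)
  have hΓ2 : 0 < Real.Gamma (1 - m / 2) := Real.Gamma_pos_of_pos (by linarith)
  have hψf : ψ = fun x => (1 / Real.Gamma ((n - m) / 2)) *
      ∫ w in Set.Ioi (0:ℝ),
        (1 - (w / (1 + w)) ^ (n / 2 - 1)) * w ^ (-m / 2) * Real.exp (-x * w) := funext hψ
  -- derivative of ψ on (0, ∞)
  have hderiv : ∀ x : ℝ, 0 < x → deriv ψ x = (1 / Real.Gamma ((n - m) / 2)) *
      ∫ w in Set.Ioi (0:ℝ),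
        -((1 - (w / (1 + w)) ^ (n / 2 - 1)) * w ^ (-m / 2 + 1) * Real.exp (-x * w)) := by
    intro x hx
    have h := ((hasDerivAt_integral (n / 2 - 1) (-m / 2) ha hq hx).const_mul
      (1 / Real.Gamma ((n - m) / 2)))
    rw [hψf]
    exact h.deriv
  -- key identity after change of variables
  have key : ∀ x : ℝ, 0 < x → Real.Gamma ((n - m) / 2) * p x =
      ∫ u in Set.Ioi (0:ℝ),
        (1 - (u / (x + u)) ^ (n / 2 - 1)) * u ^ (1 - m / 2) * Real.exp (-u) * x⁻¹ := by
    intro x hx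
    have hx' : x ≠ 0 := hx.ne'
    rw [hp, hderiv x hx, integral_neg]
    have e1 : Real.Gamma ((n - m) / 2) * (-x ^ (1 - m / 2) * ((1 / Real.Gamma ((n - m) / 2)) *
        -(∫ w in Set.Ioi (0:ℝ), (1 - (w / (1 + w)) ^ (n / 2 - 1)) * w ^ (-m / 2 + 1) *
            Real.exp (-x * w)))) =
        x ^ (1 - m / 2) * ∫ w in Set.Ioi (0:ℝ),
          (1 - (w / (1 + w)) ^ (n / 2 - 1)) * w ^ (-m / 2 + 1) * Real.exp (-x * w) := by
      field_simp
      exact setIntegral_congr_fun measurableSet_Ioi (fun w _ => by simp only [mul_comm w x])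
    rw [e1]
    have hcv := integral_comp_mul_left_Ioi
      (fun w => (1 - (w / (1 + w)) ^ (n / 2 - 1)) * w ^ (-m / 2 + 1) * Real.exp (-x * w))
      0 (inv_pos.mpr hx)
    simp only [mul_zero, inv_inv, smul_eq_mul] at hcv
    -- hcv : ∫ y in Ioi 0, f (x⁻¹ * y) = x * ∫ w in Ioi 0, f w
    have e2 : (∫ w in Set.Ioi (0:ℝ),
        (1 - (w / (1 + w)) ^ (n / 2 - 1)) * w ^ (-m / 2 + 1) * Real.exp (-x * w)) =
        x⁻¹ * ∫ y in Set.Ioi (0:ℝ),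
          (1 - (x⁻¹ * y / (1 + x⁻¹ * y)) ^ (n / 2 - 1)) * (x⁻¹ * y) ^ (-m / 2 + 1) *
            Real.exp (-x * (x⁻¹ * y)) := by
      rw [hcv]
      field_simp
      exact setIntegral_congr_fun measurableSet_Ioi (fun w _ => by simp only [mul_comm w x])
    rw [e2, ← mul_assoc, ← integral_const_mul]
    refine setIntegral_congr_fun measurableSet_Ioi (fun u hu => ?_)
    simp only [mem_Ioi] at hu
    have hxu : (0:ℝ) < x + u := by linarith
    have eb : x⁻¹ * u / (1 + x⁻¹ * u) = u / (x + u) := by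
      rw [div_eq_div_iff (by positivity) hxu.ne']
      field_simp
    have ep : (x⁻¹ * u) ^ (-m / 2 + 1) = (x⁻¹) ^ (-m / 2 + 1) * u ^ (-m / 2 + 1) :=
      Real.mul_rpow (by positivity) hu.le
    have ee : -x * (x⁻¹ * u) = -u := by field_simp
    have einv : x ^ (1 - m / 2) * x⁻¹ * ((x⁻¹) ^ (-m / 2 + 1)) = x⁻¹ := by
      rw [Real.inv_rpow hx.le, show (-m / 2 + 1 : ℝ) = 1 - m / 2 by ring]
      rw [mul_comm (x ^ (1 - m / 2)) x⁻¹, mul_assoc,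
        mul_inv_cancel₀ (Real.rpow_pos_of_pos hx _).ne']
      rw [mul_one]
    rw [eb, ep, ee, show (-m / 2 + 1 : ℝ) = 1 - m / 2 by ring]
    calc x ^ (1 - m / 2) * x⁻¹ *
          ((1 - (u / (x + u)) ^ (n / 2 - 1)) * ((x⁻¹) ^ (1 - m / 2) * u ^ (1 - m / 2)) *
            Real.exp (-u)) =
        (x ^ (1 - m / 2) * x⁻¹ * ((x⁻¹) ^ (1 - m / 2))) *
          ((1 - (u / (x + u)) ^ (n / 2 - 1)) * u ^ (1 - m / 2) * Real.exp (-u)) := by ring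
      _ = (1 - (u / (x + u)) ^ (n / 2 - 1)) * u ^ (1 - m / 2) * Real.exp (-u) * x⁻¹ := by
          rw [show (-m / 2 + 1 : ℝ) = 1 - m / 2 by ring] at einv
          rw [einv]; ring
  -- the Gamma integral
  have hint : IntegrableOn (fun u : ℝ => u ^ (-m / 2) * Real.exp (-u)) (Set.Ioi 0) := by
    have h := integrable_pow_exp hq one_pos
    simpa [one_mul] using h
  have hGam : (∫ u in Set.Ioi (0:ℝ), u ^ (-m / 2) * Real.exp (-u)) =
      Real.Gamma (1 - m / 2) := by
    have h := integral_rpow_mul_exp_neg_mul_Ioi (a := 1 - m / 2) (r := 1)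
      (by linarith) one_pos
    simp only [one_mul, one_div, inv_one, Real.one_rpow,
      show (1 - m / 2 - 1 : ℝ) = -m / 2 by ring] at h
    rw [← h]
  -- dominated convergence
  have hTend : Tendsto (fun x => ∫ u in Set.Ioi (0:ℝ),
      (1 - (u / (x + u)) ^ (n / 2 - 1)) * u ^ (1 - m / 2) * Real.exp (-u) * x⁻¹)
      (nhdsWithin 0 (Set.Ioi 0))
      (nhds (∫ u in Set.Ioi (0:ℝ), (n / 2 - 1) * (u ^ (-m / 2) * Real.exp (-u)))) := by
    apply tendsto_integral_filter_of_dominated_convergence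
      (bound := fun u => max (n / 2 - 1) 1 * (u ^ (-m / 2) * Real.exp (-u)))
    · filter_upwards [self_mem_nhdsWithin] with x hx
      exact (contOn_k (n / 2 - 1) (1 - m / 2) x hx).aestronglyMeasurable measurableSet_Ioi
    · filter_upwards [self_mem_nhdsWithin] with x hx
      rw [ae_restrict_iff' measurableSet_Ioi]
      refine Eventually.of_forall fun u hu => ?_
      simp only [mem_Ioi] at hu hx
      obtain ⟨h0, h1⟩ := k_bound (m := m) ha hx hu
      rw [Real.norm_eq_abs, abs_of_nonneg h0]
      exact h1
    · exact hint.const_mul _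
    · rw [ae_restrict_iff' measurableSet_Ioi]
      refine Eventually.of_forall fun u hu => ?_
      simp only [mem_Ioi] at hu
      have hl := (slope_limit (a := n / 2 - 1) ha hu).mul_const
        (u ^ (1 - m / 2) * Real.exp (-u))
      have hval : (n / 2 - 1) / u * (u ^ (1 - m / 2) * Real.exp (-u)) =
          (n / 2 - 1) * (u ^ (-m / 2) * Real.exp (-u)) := by
        rw [show (1 - m / 2 : ℝ) = -m / 2 + 1 by ring, Real.rpow_add hu, Real.rpow_one]
        field_simp
      rw [hval] at hl
      apply hl.congr
      intro x
      ring
  rw [integral_const_mul, hGam] at hTend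
  have hT1 : Tendsto (fun x => Real.Gamma ((n - m) / 2) * p x) (nhdsWithin 0 (Set.Ioi 0))
      (nhds ((n / 2 - 1) * Real.Gamma (1 - m / 2))) := by
    apply hTend.congr'
    filter_upwards [self_mem_nhdsWithin] with x hx
    exact (key x hx).symm
  refine ⟨hT1, ⟨(Real.Gamma ((n - m) / 2))⁻¹ * ((n / 2 - 1) * Real.Gamma (1 - m / 2)),
    by positivity, ?_⟩, ?_⟩
  · have h := hT1.const_mul (Real.Gamma ((n - m) / 2))⁻¹
    apply h.congr
    intro x
    field_simp
  · refine ⟨(Real.Gamma ((n - m) / 2))⁻¹ *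
      (max (n / 2 - 1) 1 * Real.Gamma (1 - m / 2)), fun x hx => ?_⟩
    have hle : Real.Gamma ((n - m) / 2) * p x ≤
        max (n / 2 - 1) 1 * Real.Gamma (1 - m / 2) := by
      rw [key x hx, ← hGam, ← integral_const_mul]
      apply integral_mono_of_nonneg
      · rw [Filter.EventuallyLE, ae_restrict_iff' measurableSet_Ioi]
        refine Eventually.of_forall fun u hu => ?_
        exact (k_bound (m := m) ha hx (mem_Ioi.mp hu)).1
      · exact hint.const_mul _
      · rw [Filter.EventuallyLE, ae_restrict_iff' measurableSet_Ioi]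
        refine Eventually.of_forall fun u hu => ?_
        exact (k_bound (m := m) ha hx (mem_Ioi.mp hu)).2
    calc p x = (Real.Gamma ((n - m) / 2))⁻¹ * (Real.Gamma ((n - m) / 2) * p x) := by
          field_simp
      _ ≤ (Real.Gamma ((n - m) / 2))⁻¹ * (max (n / 2 - 1) 1 * Real.Gamma (1 - m / 2)) := by
          apply mul_le_mul_of_nonneg_left hle (by positivity)
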